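/- Let 𝓧 ⊆ L¹ contain all simple random variables and let ρ: 𝓧 → [−∞, ∞] be dilatation monotone with the Fatou property. If X ∈ 𝓧 and (π_n) ⊆ Π satisfies E[X|π_n] → X in the σ(L¹, 𝓛) topology, then ρ(X) = lim_n ρ(E[X|π_n]). -/

import Mathlib

open MeasureTheory Filter Topology

variable {Ω : Type*} [MeasurableSpace Ω]

/-- A finite measurable partition of `Ω` whose members have positive measure. -/
structure FinPartition (μ : Measure Ω) where
  parts : Finset (Set Ω)
  measSet : ∀ A ∈ parts, MeasurableSet A
  pairwiseDisj : ∀ A ∈ parts, ∀ B ∈ parts, A ≠ B → Disjoint A B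
  cover : ⋃ A ∈ parts, A = Set.univ
  pos : ∀ A ∈ parts, 0 < μ A

/-- Conditional expectation of `X` with respect to the finite partition `π`:
`E[X|π] = ∑_{A ∈ π} (∫_A X dμ / μ(A)) 1_A`. -/
noncomputable def pCondExp (μ : Measure Ω) (π : FinPartition μ) (X : Ω → ℝ) : Ω → ℝ :=
  fun ω => ∑ A ∈ π.parts, Set.indicator A (fun _ => (∫ x in A, X x ∂μ) / (μ A).toReal) ω

/-- A simple random variable. -/
def IsSimpleRV (X : Ω → ℝ) : Prop := Measurable X ∧ (Set.range X).Finite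

/-- Membership in the smallest ideal of `L¹` generated by `S`. -/
def MemIdeal (μ : Measure Ω) (S : Set (Ω → ℝ)) (X : Ω → ℝ) : Prop :=
  ∃ (n : ℕ) (Y : Fin n → Ω → ℝ) (l : Fin n → ℝ),
    (∀ i, Y i ∈ S) ∧ (∀ i, 0 ≤ l i) ∧ ∀ᵐ ω ∂μ, |X ω| ≤ ∑ i, l i * |Y i ω|

/-- Dilatation monotonicity of `ρ` on `𝓧`. -/
def DilMono (μ : Measure Ω) (𝓧 : Set (Ω → ℝ)) (ρ : (Ω → ℝ) → EReal) : Prop :=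
  ∀ X ∈ 𝓧, ∀ π : FinPartition μ, ρ (pCondExp μ π X) ≤ ρ X

/-- The Fatou property of `ρ` on `𝓧`. -/
def FatouProp (μ : Measure Ω) (𝓧 : Set (Ω → ℝ)) (ρ : (Ω → ℝ) → EReal) : Prop :=
  ∀ (Xn : ℕ → Ω → ℝ) (X : Ω → ℝ), (∀ n, Xn n ∈ 𝓧) → X ∈ 𝓧 →
    (∀ᵐ ω ∂μ, Tendsto (fun n => Xn n ω) atTop (nhds (X ω))) →
    (∃ Y, MemIdeal μ 𝓧 Y ∧ ∀ᵐ ω ∂μ, ∀ n, |Xn n ω| ≤ Y ω) →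
    ρ X ≤ liminf (fun n => ρ (Xn n)) atTop

/-- Convergence of a net in the `σ(L¹, 𝓛)` topology. -/
def TendstoWeakSimple (μ : Measure Ω) {ι : Type*} (l : Filter ι)
    (Xn : ι → Ω → ℝ) (X : Ω → ℝ) : Prop :=
  ∀ Z : Ω → ℝ, IsSimpleRV Z →
    Tendsto (fun i => ∫ ω, Xn i ω * Z ω ∂μ) l (nhds (∫ ω, X ω * Z ω ∂μ))

/-- The extension `ρ̄(X) = sup_{π ∈ Π} ρ(E[X|π])`. -/
noncomputable def rhoBar (μ : Measure Ω) (ρ : (Ω → ℝ) → EReal) (X : Ω → ℝ) : EReal :=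
  ⨆ π : FinPartition μ, ρ (pCondExp μ π X)

/-- The conjugate `ρ^#(Y) = sup_{X ∈ 𝓛} { E[XY] - ρ(X) }`. -/
noncomputable def sharp (μ : Measure Ω) (ρ : (Ω → ℝ) → EReal) (Y : Ω → ℝ) : EReal :=
  ⨆ X : {X : Ω → ℝ // IsSimpleRV X}, (((∫ ω, X.1 ω * Y ω ∂μ : ℝ) : EReal) - ρ X.1)

lemma indicator_simple (A : Set Ω) (hA : MeasurableSet A) (c : ℝ) :
    IsSimpleRV (Set.indicator A (fun _ => c)) := by
  refine ⟨measurable_const.indicator hA, (Set.toFinite {c, 0}).subset ?_⟩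
  rintro x ⟨ω, rfl⟩
  by_cases h : ω ∈ A
  · simp [Set.indicator_of_mem h]
  · simp [Set.indicator_of_notMem h]

lemma pCondExp_simple (μ : Measure Ω) (σ : FinPartition μ) (W : Ω → ℝ) :
    IsSimpleRV (pCondExp μ σ W) := by
  constructor
  · exact Finset.measurable_sum _ fun A hA => measurable_const.indicator (σ.measSet A hA)
  · set c : Set Ω → ℝ := fun A => (∫ x in A, W x ∂μ) / (μ A).toReal with hc
    have : Set.range (pCondExp μ σ W) ⊆
        ↑(σ.parts.powerset.image (fun t => ∑ A ∈ t, c A)) := by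
      rintro x ⟨ω, rfl⟩
      simp only [Finset.coe_image, Set.mem_image, Finset.mem_coe, Finset.mem_powerset]
      classical
      refine ⟨σ.parts.filter (fun A => ω ∈ A), Finset.filter_subset _ _, ?_⟩
      unfold pCondExp
      rw [Finset.sum_filter]
      exact (Finset.sum_congr rfl fun A _ => by rw [Set.indicator_apply]).symm
    exact (Finset.finite_toSet _).subset this

lemma pCondExp_eq_of_mem (μ : Measure Ω) (σ : FinPartition μ) (X : Ω → ℝ) {ω : Ω} {A : Set Ω}
    (hA : A ∈ σ.parts) (hω : ω ∈ A) :
    pCondExp μ σ X ω = (∫ x in A, X x ∂μ) / (μ A).toReal := by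
  unfold pCondExp
  rw [Finset.sum_eq_single_of_mem A hA]
  · exact Set.indicator_of_mem hω _
  · intro B hB hBA
    have : ω ∉ B := fun hωB =>
      Set.disjoint_left.1 (σ.pairwiseDisj B hB A hA hBA) hωB hω
    exact Set.indicator_of_notMem this _

lemma pCondExp_congr_ae (μ : Measure Ω) (σ : FinPartition μ) {X X' : Ω → ℝ}
    (h : X =ᵐ[μ] X') : pCondExp μ σ X = pCondExp μ σ X' := by
  funext ω
  unfold pCondExp
  refine Finset.sum_congr rfl fun A _ => ?_
  congr 1
  funext
  rw [integral_congr_ae (ae_restrict_of_ae h)]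

lemma exists_finPartition {ι : Type} (μ : Measure Ω) [IsProbabilityMeasure μ]
    (s : Finset ι) (B : ι → Set Ω)
    (hm : ∀ i ∈ s, MeasurableSet (B i))
    (hd : ∀ i ∈ s, ∀ j ∈ s, i ≠ j → Disjoint (B i) (B j))
    (hc : (⋃ i ∈ s, B i) = Set.univ) :
    ∃ (σ : FinPartition μ) (N : Set Ω), μ N = 0 ∧
      (∀ i ∈ s, μ (B i) = 0 → B i ⊆ N) ∧
      ∀ i ∈ s, μ (B i) ≠ 0 → ∀ ω ∈ B i, ω ∉ N →
        ∀ X : Ω → ℝ, pCondExp μ σ X ω = (∫ x in B i, X x ∂μ) / (μ (B i)).toReal := by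
  classical
  set N : Set Ω := ⋃ i ∈ s.filter (fun i => μ (B i) = 0), B i with hN
  have hNmeas : MeasurableSet N :=
    Finset.measurableSet_biUnion _ (fun i hi => hm i (Finset.mem_filter.1 hi).1)
  have hNnull : μ N = 0 := by
    refine (measure_biUnion_null_iff (Finset.countable_toSet _)).2 ?_
    intro i hi
    exact (Finset.mem_filter.1 hi).2
  set t : Finset ι := s.filter (fun i => μ (B i) ≠ 0) with ht
  have hex : ∃ i, i ∈ t := by
    by_contra h
    push_neg at h
    have : μ (Set.univ : Set Ω) = 0 := by
      rw [← hc]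
      refine (measure_biUnion_null_iff (Finset.countable_toSet _)).2 ?_
      intro i hi
      by_contra hni
      exact h i (Finset.mem_filter.2 ⟨hi, hni⟩)
    simp [measure_univ] at this
  obtain ⟨i₀, hi₀⟩ := hex
  have hi₀s : i₀ ∈ s := (Finset.mem_filter.1 hi₀).1
  have hi₀pos : μ (B i₀) ≠ 0 := (Finset.mem_filter.1 hi₀).2
  set C : ι → Set Ω := fun i => if i = i₀ then B i₀ ∪ N else B i with hC
  -- N is disjoint from every positive cell
  have hNdisj : ∀ j ∈ t, Disjoint N (B j) := by
    intro j hj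
    obtain ⟨hjs, hjpos⟩ := Finset.mem_filter.1 hj
    refine Set.disjoint_left.2 ?_
    intro ω hωN hωj
    obtain ⟨i, ⟨his, hinull⟩, hωi⟩ : ∃ i, (i ∈ s ∧ μ (B i) = 0) ∧ ω ∈ B i := by
      simpa [hN] using hωN
    have hij : i ≠ j := fun h => hjpos (h ▸ hinull)
    exact Set.disjoint_left.1 (hd i his j hjs hij) hωi hωj
  have hCdisj : ∀ i ∈ t, ∀ j ∈ t, i ≠ j → Disjoint (C i) (C j) := by
    intro i hi j hj hij
    have hdij := hd i (Finset.mem_filter.1 hi).1 j (Finset.mem_filter.1 hj).1 hij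
    simp only [hC]
    split_ifs with h1 h2 h2
    · exact absurd (h1.trans h2.symm) hij
    · exact Set.disjoint_union_left.2 ⟨h1 ▸ hdij, hNdisj j hj⟩
    · exact Set.disjoint_union_right.2 ⟨h2 ▸ hdij, (hNdisj i hi).symm⟩
    · exact hdij
  have hmemC : ∀ i ∈ t, ∀ ω ∈ B i, ω ∈ C i := by
    intro i hi ω hω
    simp only [hC]
    split_ifs with h
    · exact Or.inl (h ▸ hω)
    · exact hω
  have hmeas' : ∀ A ∈ t.image C, MeasurableSet A := by
    intro A hA
    obtain ⟨i, hi, rfl⟩ := Finset.mem_image.1 hA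
    have := hm i (Finset.mem_filter.1 hi).1
    simp only [hC]
    split_ifs
    · exact (hm i₀ hi₀s).union hNmeas
    · exact this
  have hdisj' : ∀ A ∈ t.image C, ∀ A' ∈ t.image C, A ≠ A' → Disjoint A A' := by
    intro A hA A' hA' hne
    obtain ⟨i, hi, rfl⟩ := Finset.mem_image.1 hA
    obtain ⟨j, hj, rfl⟩ := Finset.mem_image.1 hA'
    exact hCdisj i hi j hj (fun h => hne (h ▸ rfl))
  have hcover' : ⋃ A ∈ t.image C, A = Set.univ := by
    apply Set.eq_univ_of_univ_subset
    rw [← hc]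
    refine Set.iUnion₂_subset ?_
    intro i hi ω hω
    have : ∃ j ∈ t, ω ∈ C j := by
      by_cases hpos : μ (B i) = 0
      · refine ⟨i₀, hi₀, ?_⟩
        simp only [hC, if_pos rfl]
        exact Or.inr (Set.mem_biUnion (Finset.mem_filter.2 ⟨hi, hpos⟩) hω)
      · exact ⟨i, Finset.mem_filter.2 ⟨hi, hpos⟩, hmemC i (Finset.mem_filter.2 ⟨hi, hpos⟩) ω hω⟩
    obtain ⟨j, hj, hωj⟩ := this
    exact Set.mem_biUnion (Finset.mem_image.2 ⟨j, hj, rfl⟩) hωj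
  have hpos' : ∀ A ∈ t.image C, 0 < μ A := by
    intro A hA
    obtain ⟨i, hi, rfl⟩ := Finset.mem_image.1 hA
    have hpos : μ (B i) ≠ 0 := (Finset.mem_filter.1 hi).2
    have hBC : B i ⊆ C i := by
      simp only [hC]
      split_ifs with h
      · exact h ▸ Set.subset_union_left
      · exact subset_rfl
    exact lt_of_lt_of_le (pos_iff_ne_zero.mpr hpos) (measure_mono hBC)
  refine ⟨⟨t.image C, hmeas', hdisj', hcover', hpos'⟩, N, hNnull, ?_, ?_⟩
  · -- null cells inside N
    intro i hi hnull
    exact Set.subset_biUnion_of_mem (u := B) (Finset.mem_filter.2 ⟨hi, hnull⟩)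
  · -- value formula
    intro i his hpos ω hωB hωN X
    have hit : i ∈ t := Finset.mem_filter.2 ⟨his, hpos⟩
    have hCi : C i ∈ t.image C := Finset.mem_image.2 ⟨i, hit, rfl⟩
    have hωC : ω ∈ C i := hmemC i hit ω hωB
    rw [pCondExp_eq_of_mem μ ⟨t.image C, hmeas', hdisj', hcover', hpos'⟩ X hCi hωC]
    have hCBae : C i =ᵐ[μ] B i := by
      simp only [hC]
      split_ifs with h
      · subst h
        exact (Filter.EventuallyEq.union (ae_eq_refl _)
          (ae_eq_empty.2 hNnull)).trans (by simp; exact ae_eq_refl _)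
      · exact ae_eq_refl _
    rw [setIntegral_congr_set hCBae, measure_congr hCBae]

lemma const_simple (c : ℝ) : IsSimpleRV (fun _ : Ω => c) :=
  ⟨measurable_const, (Set.finite_singleton c).subset (by rintro x ⟨ω, rfl⟩; rfl)⟩

lemma memIdeal_const (μ : Measure Ω) (𝓧 : Set (Ω → ℝ))
    (h𝓛 : ∀ Z : Ω → ℝ, IsSimpleRV Z → Z ∈ 𝓧) (c : ℝ) :
    MemIdeal μ 𝓧 (fun _ => c) := by
  refine ⟨1, fun _ => fun _ => c, fun _ => 1, fun _ => h𝓛 _ (const_simple c),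
    fun _ => zero_le_one, Filter.Eventually.of_forall fun ω => ?_⟩
  simp

lemma rho_pce_le_liminf (μ : Measure Ω) [IsProbabilityMeasure μ]
    (𝓧 : Set (Ω → ℝ)) (h𝓛 : ∀ Z : Ω → ℝ, IsSimpleRV Z → Z ∈ 𝓧)
    (ρ : (Ω → ℝ) → EReal) (hdil : DilMono μ 𝓧 ρ) (hFatou : FatouProp μ 𝓧 ρ)
    (X : Ω → ℝ) (π : ℕ → FinPartition μ)
    (hconv : TendstoWeakSimple μ atTop (fun n => pCondExp μ (π n) X) X)
    (σ : FinPartition μ) :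
    ρ (pCondExp μ σ X) ≤ liminf (fun n => ρ (pCondExp μ (π n) X)) atTop := by
  classical
  set W : ℕ → Ω → ℝ := fun n => pCondExp μ (π n) X with hW
  have hset : ∀ A ∈ σ.parts,
      Tendsto (fun n => ∫ x in A, W n x ∂μ) atTop (𝓝 (∫ x in A, X x ∂μ)) := by
    intro A hA
    have hAm := σ.measSet A hA
    have hZ : IsSimpleRV (Set.indicator A (fun _ => (1:ℝ))) := indicator_simple A hAm 1
    have h := hconv _ hZ
    have key : ∀ Y : Ω → ℝ,
        (fun ω => Y ω * Set.indicator A (fun _ => (1:ℝ)) ω) = Set.indicator A Y := by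
      intro Y; funext ω; by_cases h : ω ∈ A
      · simp [Set.indicator_of_mem h]
      · simp [Set.indicator_of_notMem h]
    simp only [key, integral_indicator hAm] at h
    exact h
  have hptw : ∀ ω, Tendsto (fun n => pCondExp μ σ (W n) ω) atTop (𝓝 (pCondExp μ σ X ω)) := by
    intro ω
    unfold pCondExp
    refine tendsto_finset_sum _ fun A hA => ?_
    by_cases h : ω ∈ A
    · simp only [Set.indicator_of_mem h]
      exact (hset A hA).div_const _
    · simp only [Set.indicator_of_notMem h]
      exact tendsto_const_nhds
  have hbdd : ∀ A ∈ σ.parts, ∃ C, ∀ n, |(∫ x in A, W n x ∂μ) / (μ A).toReal| ≤ C := by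
    intro A hA
    have h := (((hset A hA).div_const (μ A).toReal).abs).bddAbove_range
    obtain ⟨C, hC⟩ := h
    exact ⟨C, fun n => hC ⟨n, rfl⟩⟩
  choose Cf hCf using hbdd
  set C : ℝ := ∑ A ∈ σ.parts.attach, Cf A.1 A.2 with hCdef
  have hCbound : ∀ n ω, |pCondExp μ σ (W n) ω| ≤ C := by
    intro n ω
    unfold pCondExp
    calc |∑ A ∈ σ.parts, Set.indicator A
            (fun _ => (∫ x in A, W n x ∂μ) / (μ A).toReal) ω|
        ≤ ∑ A ∈ σ.parts, |Set.indicator A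
            (fun _ => (∫ x in A, W n x ∂μ) / (μ A).toReal) ω| :=
          Finset.abs_sum_le_sum_abs _ _
      _ ≤ C := by
          rw [hCdef, ← Finset.sum_attach σ.parts (fun A => |Set.indicator A
            (fun _ => (∫ x in A, W n x ∂μ) / (μ A).toReal) ω|)]
          refine Finset.sum_le_sum fun A _ => ?_
          by_cases h : ω ∈ A.1
          · rw [Set.indicator_of_mem h]
            exact hCf A.1 A.2 n
          · rw [Set.indicator_of_notMem h]
            simp only [abs_zero]
            exact le_trans (abs_nonneg _) (hCf A.1 A.2 n)
  have hF := hFatou (fun n => pCondExp μ σ (W n)) (pCondExp μ σ X)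
    (fun n => h𝓛 _ (pCondExp_simple μ σ (W n))) (h𝓛 _ (pCondExp_simple μ σ X))
    (Filter.Eventually.of_forall hptw)
    ⟨fun _ => C, memIdeal_const μ 𝓧 h𝓛 C,
      Filter.Eventually.of_forall fun ω n => hCbound n ω⟩
  refine le_trans hF (Filter.liminf_le_liminf ?_)
  exact Filter.Eventually.of_forall fun n => hdil (W n) (h𝓛 _ (pCondExp_simple μ (π n) X)) σ

lemma avg_mem_Icc (μ : Measure Ω) [IsProbabilityMeasure μ] {A : Set Ω}
    (hA : MeasurableSet A) (hpos : μ A ≠ 0) {X : Ω → ℝ} (hX : IntegrableOn X A μ)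
    {a b : ℝ} (hab : ∀ x ∈ A, X x ∈ Set.Icc a b) :
    (∫ x in A, X x ∂μ) / (μ A).toReal ∈ Set.Icc a b := by
  have hμpos : 0 < (μ A).toReal := ENNReal.toReal_pos hpos (measure_ne_top μ A)
  have hlow : a * (μ A).toReal ≤ ∫ x in A, X x ∂μ := by
    have := setIntegral_mono_on (integrableOn_const (measure_ne_top μ A))
      hX hA (fun x hx => (hab x hx).1)
    rwa [setIntegral_const, smul_eq_mul, mul_comm] at this
  have hhigh : (∫ x in A, X x ∂μ) ≤ b * (μ A).toReal := by
    have := setIntegral_mono_on hX (integrableOn_const (measure_ne_top μ A))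
      hA (fun x hx => (hab x hx).2)
    rwa [setIntegral_const, smul_eq_mul, mul_comm] at this
  constructor
  · rw [le_div_iff₀ hμpos]; exact hlow
  · rw [div_le_iff₀ hμpos]; exact hhigh

lemma tail_small (μ : Measure Ω) [IsProbabilityMeasure μ] {X' : Ω → ℝ}
    (hXm : Measurable X') (hXi : Integrable X' μ) :
    Tendsto (fun t : ℕ => ∫ x in X' ⁻¹' (Set.Ici (t:ℝ) ∪ Set.Iio (-(t:ℝ))), |X' x| ∂μ)
      atTop (𝓝 0) := by
  have hS : ∀ t : ℕ, MeasurableSet (X' ⁻¹' (Set.Ici (t:ℝ) ∪ Set.Iio (-(t:ℝ)))) :=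
    fun t => hXm (measurableSet_Ici.union measurableSet_Iio)
  have key : ∀ t : ℕ, (∫ x in X' ⁻¹' (Set.Ici (t:ℝ) ∪ Set.Iio (-(t:ℝ))), |X' x| ∂μ)
      = ∫ ω, Set.indicator (X' ⁻¹' (Set.Ici (t:ℝ) ∪ Set.Iio (-(t:ℝ))))
          (fun x => |X' x|) ω ∂μ := fun t => (integral_indicator (hS t)).symm
  simp only [key]
  have h0 : (0:ℝ) = ∫ ω, (0:ℝ) ∂μ := by simp
  rw [h0]
  refine tendsto_integral_of_dominated_convergence (fun ω => |X' ω|) ?_ hXi.abs ?_ ?_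
  · intro t
    exact ((hXm.abs.indicator (hS t)).stronglyMeasurable).aestronglyMeasurable
  · intro t
    refine Filter.Eventually.of_forall fun ω => ?_
    rw [Real.norm_eq_abs]
    by_cases h : ω ∈ X' ⁻¹' (Set.Ici (t:ℝ) ∪ Set.Iio (-(t:ℝ)))
    · rw [Set.indicator_of_mem h]; simp
    · rw [Set.indicator_of_notMem h]; simp
  · refine Filter.Eventually.of_forall fun ω => ?_
    have : ∀ᶠ t : ℕ in atTop, Set.indicator (X' ⁻¹' (Set.Ici (t:ℝ) ∪ Set.Iio (-(t:ℝ))))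
        (fun x => |X' x|) ω = 0 := by
      filter_upwards [eventually_gt_atTop ⌈|X' ω|⌉₊] with t ht
      apply Set.indicator_of_notMem
      intro h
      have habs : (t:ℝ) ≤ |X' ω| := by
        rcases h with h | h
        · exact le_trans (h : (t:ℝ) ≤ X' ω) (le_abs_self _)
        · have h' : X' ω < -(t:ℝ) := h
          have : (t:ℝ) ≤ -(X' ω) := by linarith
          exact this.trans (neg_le_abs _)
      have : (t:ℝ) ≤ ⌈|X' ω|⌉₊ := le_trans habs (Nat.le_ceil _)
      exact absurd (Nat.cast_le.1 this) (not_le.2 ht)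
    exact Tendsto.congr' (this.mono fun t ht => ht.symm) tendsto_const_nhds

lemma tail_choice (μ : Measure Ω) [IsProbabilityMeasure μ] {X' : Ω → ℝ}
    (hXm : Measurable X') (hXi : Integrable X' μ) (M : ℕ) :
    ∃ c t : ℕ, M ≤ c ∧ c + 1 ≤ t ∧
      (μ (X' ⁻¹' (Set.Ici (M:ℝ) ∪ Set.Iio (-(M:ℝ)))) ≠ 0 →
        μ (X' ⁻¹' (Set.Ico (c:ℝ) ((c:ℝ)+1) ∪ Set.Ico (-(c:ℝ)-1) (-(c:ℝ)))) ≠ 0 ∧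
        (∫ x in X' ⁻¹' (Set.Ici (t:ℝ) ∪ Set.Iio (-(t:ℝ))), |X' x| ∂μ)
          ≤ (μ (X' ⁻¹' (Set.Ico (c:ℝ) ((c:ℝ)+1) ∪ Set.Ico (-(c:ℝ)-1) (-(c:ℝ))))).toReal) := by
  by_cases hreg : μ (X' ⁻¹' (Set.Ici (M:ℝ) ∪ Set.Iio (-(M:ℝ)))) = 0
  · exact ⟨M, M + 1, le_refl M, le_refl _, fun h => absurd hreg h⟩
  · -- some band has positive measure
    have hcover : (Set.Ici (M:ℝ) ∪ Set.Iio (-(M:ℝ))) ⊆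
        ⋃ j : ℕ, (Set.Ico ((M+j:ℕ):ℝ) ((((M+j:ℕ)):ℝ)+1) ∪
          Set.Ico (-(((M+j:ℕ)):ℝ)-1) (-(((M+j:ℕ)):ℝ))) := by
      intro r hr
      rcases hr with hr | hr
      · have hr' : (M:ℝ) ≤ r := hr
        refine Set.mem_iUnion.2 ⟨⌊r - M⌋₊, Or.inl ?_⟩
        have h0 : (0:ℝ) ≤ r - M := by linarith
        have h1 : (⌊r - M⌋₊ : ℝ) ≤ r - M := Nat.floor_le h0
        have h2 : r - M < ⌊r - M⌋₊ + 1 := Nat.lt_floor_add_one _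
        constructor
        · push_cast; linarith
        · push_cast; linarith
      · have hr' : r < -(M:ℝ) := hr
        have hu : (0:ℝ) < -r - M := by linarith
        refine Set.mem_iUnion.2 ⟨⌈-r - M⌉₊ - 1, Or.inr ?_⟩
        have hc1 : 1 ≤ ⌈-r - M⌉₊ := Nat.one_le_ceil_iff.2 hu
        have heq : ((⌈-r - M⌉₊ - 1 : ℕ) : ℝ) = (⌈-r - M⌉₊ : ℝ) - 1 := by
          push_cast [hc1]; ring
        have h1 : -r - M ≤ ⌈-r - M⌉₊ := Nat.le_ceil _
        have h2 : ((⌈-r - M⌉₊ - 1 : ℕ) : ℝ) < -r - M := by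
          rw [heq]
          by_contra hcon
          push_neg at hcon
          have := Nat.ceil_le.2 (by linarith : -r - M ≤ ((⌈-r - M⌉₊ - 1 : ℕ) : ℝ)) 
          omega
        constructor
        · push_cast at h1 h2 ⊢; linarith
        · push_cast at h1 h2 ⊢; linarith
    have hex : ∃ j : ℕ, μ (X' ⁻¹' (Set.Ico (((M+j:ℕ)):ℝ) ((((M+j:ℕ)):ℝ)+1) ∪
        Set.Ico (-(((M+j:ℕ)):ℝ)-1) (-(((M+j:ℕ)):ℝ)))) ≠ 0 := by
      by_contra h
      push_neg at h
      apply hreg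
      refine measure_mono_null ?_ (measure_iUnion_null h)
      intro ω hω
      rw [Set.mem_iUnion]
      have := hcover (Set.mem_preimage.1 hω)
      rw [Set.mem_iUnion] at this
      obtain ⟨j, hj⟩ := this
      exact ⟨j, by simpa using hj⟩
    obtain ⟨j, hj⟩ := hex
    set c : ℕ := M + j with hc
    have hbpos : (0:ℝ) < (μ (X' ⁻¹' (Set.Ico (c:ℝ) ((c:ℝ)+1) ∪
        Set.Ico (-(c:ℝ)-1) (-(c:ℝ))))).toReal := by
      apply ENNReal.toReal_pos _ (measure_ne_top _ _)
      convert hj using 3 <;> push_cast <;> ring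
    have htail := tail_small μ hXm hXi
    have hev := (htail.eventually_le_const hbpos).and (eventually_ge_atTop (c+1))
    obtain ⟨t, ht1, ht2⟩ := hev.exists
    refine ⟨c, t, Nat.le_add_right M j, ht2, fun _ => ⟨?_, ?_⟩⟩
    · convert hj using 3 <;> push_cast <;> ring
    · convert ht1 using 3 <;> push_cast <;> ring

lemma core_partition (μ : Measure Ω) [IsProbabilityMeasure μ] (X' : Ω → ℝ)
    (hXm : Measurable X') (hXi : Integrable X' μ) (M : ℕ) (hM : 1 ≤ M) :
    ∃ (σ : FinPartition μ) (N : Set Ω), μ N = 0 ∧ ∀ ω ∉ N,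
      (|X' ω| < M → |pCondExp μ σ X' ω - X' ω| ≤ ((1:ℝ)/2)^M) ∧
      |pCondExp μ σ X' ω| ≤ 3 * |X' ω| + 1 := by
  classical
  obtain ⟨c, t, hMc, hct, hcond⟩ := tail_choice μ hXm hXi M
  set q : ℝ := 2^M with hqdef
  have hq : 0 < q := by positivity
  have hq1 : 1 ≤ q := by
    calc (1:ℝ) = 1^M := (one_pow M).symm
    _ ≤ 2^M := pow_le_pow_left₀ (by norm_num) (by norm_num) M
  set K : ℤ := 2^M with hKdef
  have hKq : ((K:ℤ):ℝ) = q := by rw [hKdef, hqdef]; push_cast; ring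
  have hMR : (1:ℝ) ≤ M := by exact_mod_cast hM
  have hMcR : (M:ℝ) ≤ c := by exact_mod_cast hMc
  have hctR : (c:ℝ) + 1 ≤ t := by exact_mod_cast hct
  have hc1 : (1:ℝ) ≤ c := le_trans hMR hMcR
  set Bal : Set ℝ := Set.Ico (c:ℝ) ((c:ℝ)+1) ∪ Set.Ico (-(c:ℝ)-1) (-(c:ℝ)) with hBal
  set Tl : Set ℝ := Set.Ici (t:ℝ) ∪ Set.Iio (-(t:ℝ)) with hTl
  set sf : Finset ℤ := Finset.Icc (-(t:ℤ)*K) ((t:ℤ)*K - 1) \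
    (Finset.Icc ((c:ℤ)*K) (((c:ℤ)+1)*K - 1) ∪
     Finset.Icc ((-(c:ℤ)-1)*K) ((-(c:ℤ))*K - 1)) with hsf
  set B : Option ℤ → Set Ω := fun i =>
    Option.elim i (X' ⁻¹' (Bal ∪ Tl))
      (fun k => X' ⁻¹' Set.Ico ((k:ℝ)/q) (((k:ℝ)+1)/q)) with hB
  set s : Finset (Option ℤ) := insert none (sf.image some) with hs
  -- membership characterizations
  have hBsome : ∀ (k : ℤ) (x : Ω),
      x ∈ B (some k) ↔ ((k:ℝ) ≤ X' x * q ∧ X' x * q < (k:ℝ)+1) := by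
    intro k x
    simp only [hB, Option.elim, Set.mem_preimage, Set.mem_Ico]
    rw [div_le_iff₀ hq, lt_div_iff₀ hq]
  have hBnone : ∀ x : Ω, x ∈ B none ↔ X' x ∈ Bal ∪ Tl := by
    intro x
    simp only [hB, Option.elim, Set.mem_preimage]
  -- basic arithmetic helpers
  have hfloor : ∀ (k : ℤ) (x : Ω), x ∈ B (some k) → k = ⌊X' x * q⌋ := by
    intro k x hx
    obtain ⟨h1, h2⟩ := (hBsome k x).1 hx
    exact ((Int.floor_eq_iff).2 ⟨h1, by push_cast; linarith⟩).symm
  have hfloor_mem : ∀ x : Ω, x ∈ B (some ⌊X' x * q⌋) := by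
    intro x
    exact (hBsome _ x).2 ⟨Int.floor_le _, by push_cast; exact Int.lt_floor_add_one _⟩
  -- positive ballast Finset range ↔ real band
  have hbandP : ∀ k : ℤ, k ∈ Finset.Icc ((c:ℤ)*K) (((c:ℤ)+1)*K - 1) → ∀ x : Ω,
      x ∈ B (some k) → X' x ∈ Set.Ico (c:ℝ) ((c:ℝ)+1) := by
    intro k hk x hx
    obtain ⟨h1, h2⟩ := (hBsome k x).1 hx
    obtain ⟨hk1, hk2⟩ := Finset.mem_Icc.1 hk
    have e1 : ((c:ℝ))*q ≤ (k:ℝ) := by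
      have := (Int.cast_le (R:=ℝ)).2 hk1
      push_cast at this
      rw [hKq] at this
      linarith
    have e2 : (k:ℝ)+1 ≤ ((c:ℝ)+1)*q := by
      have := (Int.cast_le (R:=ℝ)).2 hk2
      push_cast at this
      rw [hKq] at this
      linarith
    constructor
    · exact le_of_mul_le_mul_right (le_trans e1 h1) hq
    · exact lt_of_mul_lt_mul_right (lt_of_lt_of_le h2 e2) (le_of_lt hq)
  have hbandN : ∀ k : ℤ, k ∈ Finset.Icc ((-(c:ℤ)-1)*K) ((-(c:ℤ))*K - 1) → ∀ x : Ω,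
      x ∈ B (some k) → X' x ∈ Set.Ico (-(c:ℝ)-1) (-(c:ℝ)) := by
    intro k hk x hx
    obtain ⟨h1, h2⟩ := (hBsome k x).1 hx
    obtain ⟨hk1, hk2⟩ := Finset.mem_Icc.1 hk
    have e1 : (-(c:ℝ)-1)*q ≤ (k:ℝ) := by
      have := (Int.cast_le (R:=ℝ)).2 hk1
      push_cast at this
      rw [hKq] at this
      linarith
    have e2 : (k:ℝ)+1 ≤ (-(c:ℝ))*q := by
      have := (Int.cast_le (R:=ℝ)).2 hk2
      push_cast at this
      rw [hKq] at this
      linarith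
    constructor
    · exact le_of_mul_le_mul_right (le_trans e1 h1) hq
    · exact lt_of_mul_lt_mul_right (lt_of_lt_of_le h2 e2) (le_of_lt hq)
  have hfineP : ∀ x : Ω, X' x ∈ Set.Ico (c:ℝ) ((c:ℝ)+1) →
      ⌊X' x * q⌋ ∈ Finset.Icc ((c:ℤ)*K) (((c:ℤ)+1)*K - 1) := by
    intro x hx
    obtain ⟨h1, h2⟩ := hx
    refine Finset.mem_Icc.2 ⟨Int.le_floor.2 ?_, ?_⟩
    · push_cast
      rw [hKq]
      exact mul_le_mul_of_nonneg_right h1 (le_of_lt hq)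
    · have : ⌊X' x * q⌋ < ((c:ℤ)+1)*K := Int.floor_lt.2 (by
        push_cast
        rw [hKq]
        exact mul_lt_mul_of_pos_right h2 hq)
      omega
  have hfineN : ∀ x : Ω, X' x ∈ Set.Ico (-(c:ℝ)-1) (-(c:ℝ)) →
      ⌊X' x * q⌋ ∈ Finset.Icc ((-(c:ℤ)-1)*K) ((-(c:ℤ))*K - 1) := by
    intro x hx
    obtain ⟨h1, h2⟩ := hx
    refine Finset.mem_Icc.2 ⟨Int.le_floor.2 ?_, ?_⟩
    · push_cast
      rw [hKq]
      exact mul_le_mul_of_nonneg_right h1 (le_of_lt hq)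
    · have : ⌊X' x * q⌋ < (-(c:ℤ))*K := Int.floor_lt.2 (by
        push_cast
        rw [hKq]
        exact mul_lt_mul_of_pos_right h2 hq)
      omega
  have hfineRange : ∀ x : Ω, -(t:ℝ) ≤ X' x → X' x < t →
      ⌊X' x * q⌋ ∈ Finset.Icc (-(t:ℤ)*K) ((t:ℤ)*K - 1) := by
    intro x h1 h2
    refine Finset.mem_Icc.2 ⟨Int.le_floor.2 ?_, ?_⟩
    · push_cast
      rw [hKq]
      have := mul_le_mul_of_nonneg_right h1 (le_of_lt hq)
      linarith
    · have : ⌊X' x * q⌋ < (t:ℤ)*K := Int.floor_lt.2 (by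
        push_cast
        rw [hKq]
        exact mul_lt_mul_of_pos_right h2 hq)
      omega
  have hrange : ∀ k ∈ Finset.Icc (-(t:ℤ)*K) ((t:ℤ)*K - 1), ∀ x : Ω,
      x ∈ B (some k) → -(t:ℝ) ≤ X' x ∧ X' x < t := by
    intro k hk x hx
    obtain ⟨h1, h2⟩ := (hBsome k x).1 hx
    obtain ⟨hk1, hk2⟩ := Finset.mem_Icc.1 hk
    have e1 : (-(t:ℝ))*q ≤ (k:ℝ) := by
      have := (Int.cast_le (R:=ℝ)).2 hk1
      push_cast at this
      rw [hKq] at this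
      linarith
    have e2 : (k:ℝ)+1 ≤ (t:ℝ)*q := by
      have := (Int.cast_le (R:=ℝ)).2 hk2
      push_cast at this
      rw [hKq] at this
      linarith
    constructor
    · exact le_of_mul_le_mul_right (le_trans e1 h1) hq
    · exact lt_of_mul_lt_mul_right (lt_of_lt_of_le h2 e2) (le_of_lt hq)
  -- a fine cell in sf is disjoint from the merged cell
  have hkey : ∀ k ∈ sf, ∀ x : Ω, x ∈ B (some k) → x ∉ B none := by
    intro k hk x hx hxn
    obtain ⟨hkr, hknotb⟩ := Finset.mem_sdiff.1 hk
    rw [Finset.mem_union] at hknotb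
    push_neg at hknotb
    have hkx := hfloor k x hx
    rcases (hBnone x).1 hxn with hb | ht
    · rcases hb with hb | hb
      · exact hknotb.1 (hkx ▸ hfineP x hb)
      · exact hknotb.2 (hkx ▸ hfineN x hb)
    · have := hrange k hkr x hx
      rcases ht with ht | ht
      · have : X' x < t := this.2
        exact absurd ht (by simp only [Set.mem_Ici]; linarith)
      · have h1 : -(t:ℝ) ≤ X' x := this.1
        exact absurd ht (by simp only [Set.mem_Iio]; linarith)
  -- FinPartition hypotheses
  have hm : ∀ i ∈ s, MeasurableSet (B i) := by
    intro i _
    rcases i with _ | k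
    · exact hXm (((measurableSet_Ico.union measurableSet_Ico).union
        (measurableSet_Ici.union measurableSet_Iio)))
    · exact hXm measurableSet_Ico
  have hd : ∀ i ∈ s, ∀ j ∈ s, i ≠ j → Disjoint (B i) (B j) := by
    intro i hi j hj hij
    have hmem_sf : ∀ k : ℤ, some k ∈ s → k ∈ sf := by
      intro k hk
      rcases Finset.mem_insert.1 hk with h | h
      · exact absurd h (by simp)
      · obtain ⟨k', hk', hkk'⟩ := Finset.mem_image.1 h
        rwa [← Option.some_inj.1 hkk']
    refine Set.disjoint_left.2 fun x hxi hxj => ?_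
    rcases i with _ | k <;> rcases j with _ | k'
    · exact hij rfl
    · exact hkey k' (hmem_sf k' hj) x hxj hxi
    · exact hkey k (hmem_sf k hi) x hxi hxj
    · exact hij (by rw [hfloor k x hxi, hfloor k' x hxj])
  have hcov : ⋃ i ∈ s, B i = Set.univ := by
    refine Set.eq_univ_of_univ_subset fun ω _ => ?_
    by_cases hb : X' ω ∈ Bal ∪ Tl
    · exact Set.mem_biUnion (Finset.mem_insert_self none _) ((hBnone ω).2 hb)
    · rw [Set.mem_union, hBal, hTl] at hb
      push_neg at hb
      obtain ⟨hb1, hb2⟩ := hb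
      rw [Set.mem_union] at hb1 hb2
      push_neg at hb1 hb2
      have ht1 : X' ω < t := by
        by_contra h
        exact hb2.1 (by simp only [Set.mem_Ici]; linarith)
      have ht2 : -(t:ℝ) ≤ X' ω := by
        by_contra h
        exact hb2.2 (by simp only [Set.mem_Iio]; linarith)
      set k₀ := ⌊X' ω * q⌋ with hk₀
      have hk₀sf : k₀ ∈ sf := by
        refine Finset.mem_sdiff.2 ⟨hfineRange ω ht2 ht1, ?_⟩
        rw [Finset.mem_union]
        push_neg
        constructor
        · intro h
          exact hb1.1 (hbandP k₀ h ω (hfloor_mem ω))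
        · intro h
          exact hb1.2 (hbandN k₀ h ω (hfloor_mem ω))
      exact Set.mem_biUnion
        (Finset.mem_insert_of_mem (Finset.mem_image_of_mem some hk₀sf)) (hfloor_mem ω)
  obtain ⟨σ, N, hNnull, hNsub, hval⟩ := exists_finPartition μ s B hm hd hcov
  refine ⟨σ, N, hNnull, fun ω hωN => ?_⟩
  have habs_c : ∀ x : Ω, x ∈ B none → (c:ℝ) ≤ |X' x| := by
    intro x hx
    rcases (hBnone x).1 hx with hb | ht
    · rcases hb with hb | hb
      · calc (c:ℝ) ≤ X' x := hb.1
          _ ≤ |X' x| := le_abs_self _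
      · have : X' x < -(c:ℝ) := hb.2
        calc (c:ℝ) ≤ -(X' x) := by linarith
          _ ≤ |X' x| := neg_le_abs _
    · rcases ht with ht | ht
      · have : (t:ℝ) ≤ X' x := ht
        calc (c:ℝ) ≤ X' x := by linarith
          _ ≤ |X' x| := le_abs_self _
      · have : X' x < -(t:ℝ) := ht
        calc (c:ℝ) ≤ -(X' x) := by linarith
          _ ≤ |X' x| := neg_le_abs _
  have hIccSome : ∀ (k : ℤ), ∀ x ∈ B (some k), X' x ∈ Set.Icc ((k:ℝ)/q) (((k:ℝ)+1)/q) := by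
    intro k x hx
    obtain ⟨h1, h2⟩ := (hBsome k x).1 hx
    constructor
    · rw [div_le_iff₀ hq]; exact h1
    · rw [le_div_iff₀ hq]; linarith
  -- value in its cell for fine cells
  have hfineVal : ∀ (k : ℤ), some k ∈ s → ω ∈ B (some k) →
      |pCondExp μ σ X' ω - X' ω| ≤ 1/q := by
    intro k hks hωB
    have hpos : μ (B (some k)) ≠ 0 := fun h => hωN (hNsub _ hks h hωB)
    have hv := hval (some k) hks hpos ω hωB hωN X'
    have havg : (∫ x in B (some k), X' x ∂μ) / (μ (B (some k))).toReal ∈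
        Set.Icc ((k:ℝ)/q) (((k:ℝ)+1)/q) :=
      avg_mem_Icc μ (hm _ hks) hpos hXi.integrableOn (hIccSome k)
    have hrin := hIccSome k ω hωB
    rw [hv]
    have hlen : ((k:ℝ)+1)/q - (k:ℝ)/q = 1/q := by ring
    rw [abs_sub_le_iff]
    constructor
    · linarith [havg.1, havg.2, hrin.1, hrin.2]
    · linarith [havg.1, havg.2, hrin.1, hrin.2]
  constructor
  · -- convergence bound
    intro hrM
    obtain ⟨hr1, hr2⟩ := abs_lt.1 hrM
    set k₀ := ⌊X' ω * q⌋ with hk₀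
    have hk₀sf : k₀ ∈ sf := by
      refine Finset.mem_sdiff.2 ⟨hfineRange ω (by linarith) (by linarith), ?_⟩
      rw [Finset.mem_union]
      push_neg
      constructor
      · intro h
        have := (hbandP k₀ h ω (hfloor_mem ω)).1
        linarith
      · intro h
        have := (hbandN k₀ h ω (hfloor_mem ω)).2
        linarith
    have hks : some k₀ ∈ s := Finset.mem_insert_of_mem (Finset.mem_image_of_mem some hk₀sf)
    have := hfineVal k₀ hks (hfloor_mem ω)
    have hpow : ((1:ℝ)/2)^M = 1/q := by
      rw [hqdef, div_pow, one_pow]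
    rw [hpow]
    exact this
  · -- domination
    have hωuniv : ω ∈ ⋃ i ∈ s, B i := hcov ▸ Set.mem_univ ω
    obtain ⟨i, hi, hωB⟩ := Set.mem_iUnion₂.1 hωuniv
    have hpos : μ (B i) ≠ 0 := fun h => hωN (hNsub i hi h hωB)
    have hv := hval i hi hpos ω hωB hωN X'
    rcases i with _ | k
    · -- merged tail cell
      have hμAR : 0 < (μ (B none)).toReal := ENNReal.toReal_pos hpos (measure_ne_top μ _)
      have hreg : μ (X' ⁻¹' (Set.Ici (M:ℝ) ∪ Set.Iio (-(M:ℝ)))) ≠ 0 := by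
        refine fun h0 => hpos (measure_mono_null ?_ h0)
        intro x hx
        rcases (hBnone x).1 hx with hb | ht
        · rcases hb with hb | hb
          · exact Or.inl (by simp only [Set.mem_Ici]; linarith [hb.1])
          · exact Or.inr (by simp only [Set.mem_Iio]; linarith [hb.2])
        · rcases ht with ht | ht
          · have : (t:ℝ) ≤ X' x := ht
            exact Or.inl (by simp only [Set.mem_Ici]; linarith)
          · have : X' x < -(t:ℝ) := ht
            exact Or.inr (by simp only [Set.mem_Iio]; linarith)
      obtain ⟨hb, htail⟩ := hcond hreg
      set BalΩ := X' ⁻¹' Bal with hBalΩ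
      set TlΩ := X' ⁻¹' Tl with hTlΩ
      have hbb : μ BalΩ ≠ 0 := hb
      have hbR : 0 < (μ BalΩ).toReal := ENNReal.toReal_pos hbb (measure_ne_top μ _)
      have hBnoneU : B none = BalΩ ∪ TlΩ := by
        simp only [hB, Option.elim, hBalΩ, hTlΩ, Set.preimage_union]
      have hmeasBal : MeasurableSet BalΩ := hXm (measurableSet_Ico.union measurableSet_Ico)
      have hmeasTl : MeasurableSet TlΩ := hXm (measurableSet_Ici.union measurableSet_Iio)
      have hdisjBT : Disjoint BalΩ TlΩ := by
        refine Set.disjoint_left.2 fun x hx1 hx2 => ?_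
        have h1 : X' x ∈ Bal := hx1
        have h2 : X' x ∈ Tl := hx2
        have hx1' : -(c:ℝ)-1 ≤ X' x ∧ X' x < (c:ℝ)+1 := by
          rcases h1 with h | h
          · exact ⟨by linarith [h.1], h.2⟩
          · exact ⟨h.1, by linarith [h.2]⟩
        rcases h2 with h | h
        · have : (t:ℝ) ≤ X' x := h
          linarith [hx1'.2]
        · have : X' x < -(t:ℝ) := h
          linarith [hx1'.1]
      have habs : |∫ x in B none, X' x ∂μ| ≤ ∫ x in B none, |X' x| ∂μ := by
        simpa [Real.norm_eq_abs] using
          norm_integral_le_integral_norm (μ := μ.restrict (B none)) X'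
      have hsplit : ∫ x in B none, |X' x| ∂μ
          = (∫ x in BalΩ, |X' x| ∂μ) + ∫ x in TlΩ, |X' x| ∂μ := by
        rw [hBnoneU]
        exact setIntegral_union hdisjBT hmeasTl hXi.abs.integrableOn hXi.abs.integrableOn
      have hptbound : ∀ x ∈ BalΩ, |X' x| ≤ (c:ℝ)+1 := by
        intro x hx
        have h1 : X' x ∈ Bal := hx
        rcases h1 with h | h
        · rw [abs_of_nonneg (by linarith [h.1, hc1])]
          linarith [h.2]
        · rw [abs_of_nonpos (by linarith [h.2, hc1])]
          linarith [h.1]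
      have hBalBound : ∫ x in BalΩ, |X' x| ∂μ ≤ ((c:ℝ)+1) * (μ BalΩ).toReal := by
        have hmono := setIntegral_mono_on hXi.abs.integrableOn
          (integrableOn_const (measure_ne_top μ BalΩ)) hmeasBal hptbound
        rwa [setIntegral_const, smul_eq_mul, mul_comm] at hmono
      have hTlBound : ∫ x in TlΩ, |X' x| ∂μ ≤ (μ BalΩ).toReal := htail
      have hμb_le : (μ BalΩ).toReal ≤ (μ (B none)).toReal := by
        refine ENNReal.toReal_le_toReal (measure_ne_top μ _) (measure_ne_top μ _) |>.2 ?_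
        exact measure_mono (hBnoneU ▸ Set.subset_union_left)
      have hA_le : ∫ x in B none, |X' x| ∂μ ≤ ((c:ℝ)+2) * (μ (B none)).toReal := by
        rw [hsplit]
        have h1 : ((c:ℝ)+1) * (μ BalΩ).toReal + (μ BalΩ).toReal
            = ((c:ℝ)+2) * (μ BalΩ).toReal := by ring
        nlinarith [hBalBound, hTlBound, hμb_le, hbR, hc1]
      have hvbound : |pCondExp μ σ X' ω| ≤ (c:ℝ)+2 := by
        rw [hv, abs_div, abs_of_nonneg (le_of_lt hμAR)]
        rw [div_le_iff₀ hμAR]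
        calc |∫ x in B none, X' x ∂μ| ≤ ∫ x in B none, |X' x| ∂μ := habs
          _ ≤ ((c:ℝ)+2) * (μ (B none)).toReal := hA_le
      have hrc := habs_c ω hωB
      linarith [hvbound, hrc, hc1]
    · -- fine cell
      have hfv := hfineVal k hi hωB
      have h1q : 1/q ≤ 1 := by
        rw [div_le_one hq]
        exact hq1
      calc |pCondExp μ σ X' ω|
          = |(pCondExp μ σ X' ω - X' ω) + X' ω| := by ring_nf
        _ ≤ |pCondExp μ σ X' ω - X' ω| + |X' ω| := abs_add_le _ _
        _ ≤ 1 + |X' ω| := by linarith [hfv]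
        _ ≤ 3 * |X' ω| + 1 := by linarith [abs_nonneg (X' ω)]

lemma exists_approx (μ : Measure Ω) [IsProbabilityMeasure μ] (X : Ω → ℝ)
    (hXi : Integrable X μ) :
    ∃ σ : ℕ → FinPartition μ,
      (∀ᵐ ω ∂μ, Tendsto (fun m => pCondExp μ (σ m) X ω) atTop (𝓝 (X ω))) ∧
      (∀ᵐ ω ∂μ, ∀ m, |pCondExp μ (σ m) X ω| ≤ 3 * |X ω| + 1) := by
  classical
  set X' : Ω → ℝ := hXi.1.mk X with hX'
  have hmeas : Measurable X' := hXi.1.stronglyMeasurable_mk.measurable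
  have hae : X =ᵐ[μ] X' := hXi.1.ae_eq_mk
  have hXi' : Integrable X' μ := hXi.congr hae
  choose σ N hN hprop using fun m =>
    core_partition μ X' hmeas hXi' (m+1) (Nat.succ_le_succ (Nat.zero_le m))
  have hpce : ∀ m, pCondExp μ (σ m) X = pCondExp μ (σ m) X' :=
    fun m => pCondExp_congr_ae μ (σ m) hae
  have hNall : ∀ᵐ ω ∂μ, ∀ m, ω ∉ N m := by
    have : μ (⋃ m, N m) = 0 := measure_iUnion_null hN
    have h2 := measure_eq_zero_iff_ae_notMem.1 this
    filter_upwards [h2] with ω hω m hm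
    exact hω (Set.mem_iUnion.2 ⟨m, hm⟩)
  refine ⟨σ, ?_, ?_⟩
  · filter_upwards [hae, hNall] with ω hωe hωN
    have hfun : (fun m => pCondExp μ (σ m) X ω) = fun m => pCondExp μ (σ m) X' ω :=
      funext fun m => by rw [hpce m]
    rw [hfun, hωe]
    rw [← tendsto_sub_nhds_zero_iff]
    have hbnd : ∀ᶠ m in atTop,
        ‖pCondExp μ (σ m) X' ω - X' ω‖ ≤ ((1:ℝ)/2)^(m+1) := by
      filter_upwards [eventually_ge_atTop ⌈|X' ω|⌉₊] with m hm
      have hlt : |X' ω| < (m:ℝ) + 1 := by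
        have h1 : |X' ω| ≤ (⌈|X' ω|⌉₊ : ℝ) := Nat.le_ceil _
        have h2 : ((⌈|X' ω|⌉₊ : ℕ) : ℝ) ≤ m := Nat.cast_le.2 hm
        linarith
      have := (hprop m ω (hωN m)).1 (by exact_mod_cast hlt)
      simpa [Real.norm_eq_abs] using this
    have h0 : Tendsto (fun m : ℕ => ((1:ℝ)/2)^m) atTop (𝓝 0) :=
      tendsto_pow_atTop_nhds_zero_of_lt_one (by norm_num) (by norm_num)
    exact squeeze_zero_norm' hbnd (h0.comp (tendsto_add_atTop_nat 1))
  · filter_upwards [hae, hNall] with ω hωe hωN m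
    rw [hpce m, hωe]
    exact (hprop m ω (hωN m)).2

/-- If `ρ` on `𝓧 ⊇ 𝓛` is dilatation monotone with the Fatou property,
`X ∈ 𝓧` and `E[X|π n] → X` in the `σ(L¹, 𝓛)` topology, then `ρ(E[X|π n]) → ρ(X)`. -/
theorem stmt5 (μ : Measure Ω) [IsProbabilityMeasure μ] [NullSingletonClass μ]
    (𝓧 : Set (Ω → ℝ)) (h𝓧L1 : ∀ X ∈ 𝓧, Integrable X μ)
    (h𝓛 : ∀ Z : Ω → ℝ, IsSimpleRV Z → Z ∈ 𝓧)
    (ρ : (Ω → ℝ) → EReal)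
    (hdil : DilMono μ 𝓧 ρ) (hFatou : FatouProp μ 𝓧 ρ)
    (X : Ω → ℝ) (hX : X ∈ 𝓧) (π : ℕ → FinPartition μ)
    (hconv : TendstoWeakSimple μ atTop (fun n => pCondExp μ (π n) X) X) :
    Tendsto (fun n => ρ (pCondExp μ (π n) X)) atTop (nhds (ρ X)) := by
  set L := liminf (fun n => ρ (pCondExp μ (π n) X)) atTop with hL
  have hub : ∀ n, ρ (pCondExp μ (π n) X) ≤ ρ X := fun n => hdil X hX (π n)
  obtain ⟨σ, hconv', hdom⟩ := exists_approx μ X (h𝓧L1 X hX)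
  have hcells : ∀ m, ρ (pCondExp μ (σ m) X) ≤ L :=
    fun m => rho_pce_le_liminf μ 𝓧 h𝓛 ρ hdil hFatou X π hconv (σ m)
  have hmemI : MemIdeal μ 𝓧 (fun ω => 3 * |X ω| + 1) := by
    refine ⟨2, ![X, fun _ => 1], ![3, 1], ?_, ?_, ?_⟩
    · intro i
      fin_cases i
      · exact hX
      · exact h𝓛 _ (const_simple 1)
    · intro i
      fin_cases i <;> norm_num
    · refine Filter.Eventually.of_forall fun ω => ?_
      rw [abs_of_nonneg (by positivity)]
      simp [Fin.sum_univ_two]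
  have hFa : ρ X ≤ liminf (fun m => ρ (pCondExp μ (σ m) X)) atTop :=
    hFatou (fun m => pCondExp μ (σ m) X) X
      (fun m => h𝓛 _ (pCondExp_simple μ (σ m) X)) hX hconv'
      ⟨fun ω => 3 * |X ω| + 1, hmemI, hdom⟩
  have hlow : ρ X ≤ L := by
    refine le_trans hFa (le_trans (Filter.liminf_le_liminf
      (Filter.Eventually.of_forall hcells)) ?_)
    simp [Filter.liminf_const]
  refine tendsto_of_le_liminf_of_limsup_le hlow ?_
  refine le_trans (Filter.limsup_le_limsup (Filter.Eventually.of_forall hub)) ?_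
  simp [Filter.limsup_const]
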